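/- Let M be a finite-dimensional smooth real manifold without boundary, X a smooth vector field on M, and γ : ℝ → M an integral curve of X (γ′(t) = X(γ(t)) for all t ∈ ℝ). Let f₁, …, f_s : M → ℝ and h^i_j : M → ℝ (1 ≤ i, j ≤ s) be smooth functions such that for each j and every x ∈ M, the derivative of f_j along X satisfies (X f_j)(x) = Σ_{i=1}^s h^i_j(x) f_i(x), where (X f)(x) denotes the differential of f at x applied to X(x). If f_i(γ(0)) = 0 for all i, then f_i(γ(t)) = 0 for all t ∈ ℝ and all i. -/

import Mathlib

/-- Integral curves of a smooth vector field starting in the common zero locus of a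
Darboux family of smooth functions (functions whose derivatives along the vector
field are linear combinations of themselves with smooth cofactors) remain in that
locus for all time. -/
theorem darboux_family_locus_invariant
    {E : Type*} [NormedAddCommGroup E] [NormedSpace ℝ E] [FiniteDimensional ℝ E]
    {H : Type*} [TopologicalSpace H] {I : ModelWithCorners ℝ E H} [I.Boundaryless]
    {M : Type*} [TopologicalSpace M] [ChartedSpace H M] [IsManifold I (⊤ : ℕ∞) M]
    (X : (x : M) → TangentSpace I x)
    (hX : ContMDiff I I.tangent (⊤ : ℕ∞) (fun x => (⟨x, X x⟩ : TangentBundle I M)))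
    (γ : ℝ → M)
    (hγ : ∀ t : ℝ, HasMFDerivAt (modelWithCornersSelf ℝ ℝ) I γ t
      ((1 : ℝ →L[ℝ] ℝ).smulRight (X (γ t))))
    {s : ℕ} (f : Fin s → M → ℝ)
    (hf : ∀ j, ContMDiff I (modelWithCornersSelf ℝ ℝ) (⊤ : ℕ∞) (f j))
    (h : Fin s → Fin s → M → ℝ)
    (hh : ∀ i j, ContMDiff I (modelWithCornersSelf ℝ ℝ) (⊤ : ℕ∞) (h i j))
    (hder : ∀ (j : Fin s) (x : M),
      mfderiv I (modelWithCornersSelf ℝ ℝ) (f j) x (X x) = ∑ i, h i j x * f i x)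
    (h0 : ∀ i, f i (γ 0) = 0) :
    ∀ (t : ℝ) (i : Fin s), f i (γ t) = 0 := by
  intro t i
  -- the curve is continuous
  have hγc : Continuous γ := by
    rw [continuous_iff_continuousAt]
    exact fun τ => (hγ τ).continuousAt
  -- the functions along the curve
  set F : ℝ → Fin s → ℝ := fun τ j => f j (γ τ) with hFdef
  -- derivative of each component
  have hFderiv : ∀ (j : Fin s) (τ : ℝ),
      HasDerivAt (fun τ => f j (γ τ)) (∑ i, h i j (γ τ) * f i (γ τ)) τ := by
    intro j τ
    have h1 : HasMFDerivAt I (modelWithCornersSelf ℝ ℝ) (f j) (γ τ)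
        (mfderiv I (modelWithCornersSelf ℝ ℝ) (f j) (γ τ)) :=
      ((hf j).mdifferentiableAt (by simp)).hasMFDerivAt
    have h2 := h1.comp τ (hγ τ)
    rw [hasMFDerivAt_iff_hasFDerivAt] at h2
    have h3 : HasDerivAt (f j ∘ γ) (((mfderiv I (modelWithCornersSelf ℝ ℝ) (f j) (γ τ)).comp
        ((1 : ℝ →L[ℝ] ℝ).smulRight (X (γ τ)))) 1) τ :=
      HasFDerivAt.hasDerivAt (f' := ((mfderiv I (modelWithCornersSelf ℝ ℝ) (f j) (γ τ)).comp
        ((1 : ℝ →L[ℝ] ℝ).smulRight (X (γ τ))) : ℝ →L[ℝ] ℝ)) h2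
    have heq : ((mfderiv I (modelWithCornersSelf ℝ ℝ) (f j) (γ τ)).comp
        ((1 : ℝ →L[ℝ] ℝ).smulRight (X (γ τ)))) 1
        = ∑ i, h i j (γ τ) * f i (γ τ) := by
      rw [ContinuousLinearMap.comp_apply, ContinuousLinearMap.smulRight_apply,
        ContinuousLinearMap.one_apply, one_smul, hder]
    convert h3 using 1
    rw [heq]; exact Iff.rfl
  -- the clamp function
  set T : ℝ := |t| + 1 with hT
  have hT0 : (0:ℝ) < T := by positivity
  set c : ℝ → ℝ := fun τ => max (-T) (min τ T) with hc
  have hc_mem : ∀ τ, c τ ∈ Set.Icc (-T) T := by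
    intro τ
    constructor
    · exact le_max_left _ _
    · exact max_le (by linarith) (min_le_right _ _)
  have hc_id : ∀ τ ∈ Set.Icc (-T) T, c τ = τ := by
    intro τ hτ
    rw [hc]
    simp only
    rw [min_eq_left hτ.2, max_eq_right hτ.1]
  -- bound for coefficients on the compact interval
  have hBcont : ContinuousOn (fun τ => ∑ j, ∑ i, |h i j (γ τ)|) (Set.Icc (-T) T) := by
    apply Continuous.continuousOn
    apply continuous_finset_sum
    intro j _
    apply continuous_finset_sum
    intro i' _
    exact ((hh i' j).continuous.comp hγc).abs
  obtain ⟨C, hC⟩ := (isCompact_Icc).exists_bound_of_continuousOn hBcont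
  have hC0 : 0 ≤ C := by
    have := hC 0 ⟨by linarith, by linarith⟩
    exact le_trans (norm_nonneg _) this
  set K : NNReal := ⟨C, hC0⟩ with hK
  -- the vector field of the ODE
  set v : ℝ → (Fin s → ℝ) → (Fin s → ℝ) :=
    fun τ y j => ∑ i, h i j (γ (c τ)) * y i with hv_def
  have hbound : ∀ (τ : ℝ) (j : Fin s), ∑ i, |h i j (γ (c τ))| ≤ C := by
    intro τ j
    have h1 := hC (c τ) (hc_mem τ)
    have h2 : ∑ i, |h i j (γ (c τ))| ≤ ∑ j', ∑ i, |h i j' (γ (c τ))| := by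
      apply Finset.single_le_sum (f := fun j' => ∑ i, |h i j' (γ (c τ))|)
      · intro j' _
        positivity
      · exact Finset.mem_univ j
    calc ∑ i, |h i j (γ (c τ))| ≤ ∑ j', ∑ i, |h i j' (γ (c τ))| := h2
      _ ≤ ‖∑ j', ∑ i, |h i j' (γ (c τ))|‖ := le_abs_self _
      _ ≤ C := h1
  have hlip : ∀ τ, LipschitzWith K (v τ) := by
    intro τ
    rw [lipschitzWith_iff_dist_le_mul]
    intro y z
    have hKC : (K : ℝ) = C := rfl
    rcases Nat.eq_zero_or_pos s with hs | hs
    · subst hs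
      simp [Subsingleton.elim y z]
    apply (dist_pi_le_iff (by positivity)).2
    intro j
    rw [Real.dist_eq]
    have : v τ y j - v τ z j = ∑ i, h i j (γ (c τ)) * (y i - z i) := by
      simp only [hv_def]
      rw [← Finset.sum_sub_distrib]
      congr 1
      ext i'
      ring
    rw [this]
    calc |∑ i, h i j (γ (c τ)) * (y i - z i)|
        ≤ ∑ i, |h i j (γ (c τ)) * (y i - z i)| := Finset.abs_sum_le_sum_abs _ _
      _ ≤ ∑ i, |h i j (γ (c τ))| * dist y z := by
          apply Finset.sum_le_sum
          intro i' _
          rw [abs_mul]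
          apply mul_le_mul_of_nonneg_left _ (abs_nonneg _)
          rw [← Real.dist_eq]
          exact dist_le_pi_dist y z i'
      _ = (∑ i, |h i j (γ (c τ))|) * dist y z := by rw [Finset.sum_mul]
      _ ≤ C * dist y z := by
          apply mul_le_mul_of_nonneg_right (hbound τ j) dist_nonneg
      _ = (K : ℝ) * dist y z := by rw [hKC]
  -- F solves the ODE inside the interval
  have hF' : ∀ τ ∈ Set.Ioo (-T) T, HasDerivAt F (v τ (F τ)) τ := by
    intro τ hτ
    have : v τ (F τ) = fun j => ∑ i, h i j (γ τ) * f i (γ τ) := by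
      funext j
      simp only [hv_def, hFdef, hc_id τ (Set.mem_Icc_of_Ioo hτ)]
    rw [this]
    rw [hasDerivAt_pi]
    intro j
    exact hFderiv j τ
  -- the zero function also solves it
  have hZ' : ∀ τ ∈ Set.Ioo (-T) T, HasDerivAt (fun _ : ℝ => (0 : Fin s → ℝ))
      (v τ ((fun _ : ℝ => (0 : Fin s → ℝ)) τ)) τ := by
    intro τ _
    have : v τ (0 : Fin s → ℝ) = 0 := by
      funext j
      simp [hv_def]
    simpa [this] using (hasDerivAt_const τ (0 : Fin s → ℝ))
  have hFc : ContinuousOn F (Set.Icc (-T) T) := by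
    apply Continuous.continuousOn
    rw [continuous_pi_iff]
    intro j
    exact (hf j).continuous.comp hγc
  have h00 : F 0 = (fun _ : ℝ => (0 : Fin s → ℝ)) 0 := by
    funext j
    exact h0 j
  have key : Set.EqOn F (fun _ : ℝ => (0 : Fin s → ℝ)) (Set.Icc (-T) T) := by
    apply ODE_solution_unique_of_mem_Icc (s := fun _ => Set.univ)
      (fun τ _ => (hlip τ).lipschitzOnWith) (t₀ := 0)
      ⟨by linarith, by linarith⟩ hFc hF' (fun _ _ => Set.mem_univ _)
      (continuous_const.continuousOn) hZ' (fun _ _ => Set.mem_univ _) h00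
  have ht_mem : t ∈ Set.Icc (-T) T := by
    constructor
    · have := neg_abs_le t; linarith
    · have := le_abs_self t; linarith
  have := key ht_mem
  exact congrFun this i
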